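/- With notation as above, the $\mathbb{Z}$-linear map sending $\alpha^{ij} - \alpha^{i,j+1} \mapsto \beta^{ji} - \beta^{j,i+1}$ (for $1 \le i \le n-1$, $1 \le j \le l-1$) extends to an isometry of lattices $N_n^l \to \widetilde{N}_l^n$; in particular, for all admissible indices, $(\alpha^{ip} - \alpha^{i,p+1},\, \alpha^{jq} - \alpha^{j,q+1}) = (\beta^{pi} - \beta^{p,i+1},\, \beta^{qj} - \beta^{q,j+1})$. -/

import Mathlib

/-- The Cartan matrix of type `A_m`. -/
def cartanA (m : ℕ) : Matrix (Fin m) (Fin m) ℤ :=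
  Matrix.of fun i j =>
    if i = j then 2 else if i.val + 1 = j.val ∨ j.val + 1 = i.val then -1 else 0

lemma gram_calc {a b : ℕ} {M : Type*} [AddCommGroup M] [Module ℤ M]
    (B : LinearMap.BilinForm ℤ M) (α : Fin a → Fin b → M)
    (hα : ∀ (i p : Fin a) (j q : Fin b),
      B (α i j) (α p q) = if j = q then cartanA a i p else 0)
    (i j : Fin a) (p q : Fin (b - 1)) :
    B (α i ⟨p.val, by have := p.isLt; omega⟩ - α i ⟨p.val + 1, by have := p.isLt; omega⟩)
      (α j ⟨q.val, by have := q.isLt; omega⟩ - α j ⟨q.val + 1, by have := q.isLt; omega⟩)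
      = cartanA a i j * cartanA (b - 1) p q := by
  simp only [map_sub, LinearMap.sub_apply, hα, Fin.mk.injEq]
  simp only [cartanA, Matrix.of_apply, Fin.ext_iff]
  split_ifs <;> first | (exfalso; omega) | ring1

lemma cartan_row_sum {m : ℕ} (v : Fin m → ℤ) (i : Fin m) :
    ∑ j, cartanA m i j * v j =
      2 * v i - (if h : i.val + 1 < m then v ⟨i.val + 1, h⟩ else 0)
        - (if h : 1 ≤ i.val then v ⟨i.val - 1, by omega⟩ else 0) := by
  have key : ∀ j : Fin m, cartanA m i j * v j =
      (if j = i then 2 * v j else 0)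
      + (if h : i.val + 1 < m then (if j = ⟨i.val + 1, h⟩ then -v j else 0) else 0)
      + (if h : 1 ≤ i.val then (if j = ⟨i.val - 1, by omega⟩ then -v j else 0) else 0) := by
    intro j
    simp only [cartanA, Matrix.of_apply, Fin.ext_iff]
    split_ifs <;> first | (exfalso; omega) | ring1
  rw [Finset.sum_congr rfl (fun j _ => key j), Finset.sum_add_distrib,
    Finset.sum_add_distrib, Finset.sum_ite_eq' Finset.univ i (fun j => 2 * v j)]
  simp only [Finset.mem_univ, if_true]
  by_cases h1 : i.val + 1 < m <;> by_cases h2 : 1 ≤ i.val <;>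
    simp [h1, h2, Finset.sum_ite_eq' Finset.univ] <;> ring

set_option maxHeartbeats 1200000 in
lemma cartan_inj {m : ℕ} (v : Fin m → ℤ) (hv : ∀ i, ∑ j, cartanA m i j * v j = 0) :
    v = 0 := by
  rcases Nat.eq_zero_or_pos m with hm | hm
  · funext i; exact absurd i.isLt (by omega)
  have hrow : ∀ i : Fin m,
      2 * v i - (if h : i.val + 1 < m then v ⟨i.val + 1, h⟩ else 0)
        - (if h : 1 ≤ i.val then v ⟨i.val - 1, by omega⟩ else 0) = 0 := by
    intro i; rw [← cartan_row_sum]; exact hv i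
  set v0 := v ⟨0, hm⟩ with hv0
  have main : ∀ k, (hk : k < m) → v ⟨k, hk⟩ = ((k : ℤ) + 1) * v0 := by
    intro k
    induction k using Nat.strong_induction_on with
    | _ k ih =>
      intro hk
      rcases k with _ | k
      · simp [hv0]
      · 
        have h1 := hrow ⟨k, by omega⟩
        simp only [Fin.val_mk] at h1
        rw [dif_pos hk] at h1
        rcases Nat.eq_zero_or_pos k with hk0 | hk0
        · subst hk0
          rw [dif_neg (by omega)] at h1
          have e0 : v ⟨0, by omega⟩ = ((0 : ℤ) + 1) * v0 := ih 0 (by omega) (by omega)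
          push_cast
          linear_combination 2 * e0 - h1
        · rw [dif_pos (by omega)] at h1
          have e1 : v ⟨k, by omega⟩ = ((k : ℤ) + 1) * v0 := ih k (by omega) (by omega)
          have e2 : v ⟨k - 1, by omega⟩ = (((k - 1 : ℕ) : ℤ) + 1) * v0 :=
            ih (k - 1) (by omega) (by omega)
          have hc : ((k - 1 : ℕ) : ℤ) = (k : ℤ) - 1 := by omega
          push_cast
          linear_combination -h1 + 2 * e1 - e2 - v0 * hc
  have hlast := hrow ⟨m - 1, by omega⟩
  simp only [Fin.val_mk] at hlast
  rw [dif_neg (by omega)] at hlast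
  have hv0zero : v0 = 0 := by
    rcases Nat.lt_or_ge m 2 with hm2 | hm2
    · have : m = 1 := by omega
      subst this
      rw [dif_neg (by omega)] at hlast
      have : v ⟨0, by omega⟩ = v0 := rfl
      linarith [hlast]
    · rw [dif_pos (by omega)] at hlast
      have e1 : v ⟨m - 1, by omega⟩ = (((m - 1 : ℕ) : ℤ) + 1) * v0 := main _ _
      have e2 : v ⟨m - 1 - 1, by omega⟩ = (((m - 1 - 1 : ℕ) : ℤ) + 1) * v0 := main _ _
      have hc1 : ((m - 1 : ℕ) : ℤ) = (m : ℤ) - 1 := by omega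
      have hc2 : ((m - 1 - 1 : ℕ) : ℤ) = (m : ℤ) - 2 := by omega
      have hmul : ((m : ℤ) + 1) * v0 = 0 := by
        linear_combination hlast - 2 * e1 + e2 - 2 * v0 * hc1 + v0 * hc2
      rcases mul_eq_zero.mp hmul with h | h
      · exfalso; omega
      · exact h
  funext i
  have := main i.val i.isLt
  simpa [Fin.eta, hv0zero] using this

lemma cartan_symm (m : ℕ) (i j : Fin m) : cartanA m i j = cartanA m j i := by
  simp only [cartanA, Matrix.of_apply, Fin.ext_iff]
  split_ifs <;> first | rfl | (exfalso; omega)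

lemma cartan2_inj {a b : ℕ} (c : Fin a × Fin b → ℤ)
    (h : ∀ (i : Fin a) (p : Fin b),
      ∑ jq : Fin a × Fin b, c jq * (cartanA a i jq.1 * cartanA b p jq.2) = 0) :
    c = 0 := by
  have h' : ∀ (i : Fin a) (p : Fin b),
      ∑ q, cartanA b p q * (∑ j, cartanA a i j * c (j, q)) = 0 := by
    intro i p
    have e : ∀ q : Fin b, cartanA b p q * (∑ j, cartanA a i j * c (j, q))
        = ∑ j, c (j, q) * (cartanA a i j * cartanA b p q) := by
      intro q
      rw [Finset.mul_sum]
      exact Finset.sum_congr rfl fun j _ => by ring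
    rw [Finset.sum_congr rfl fun q _ => e q]
    have h2 := h i p
    rw [Fintype.sum_prod_type] at h2
    rw [Finset.sum_comm]
    exact h2
  have hD : ∀ i : Fin a, (fun q => ∑ j, cartanA a i j * c (j, q)) = 0 :=
    fun i => cartan_inj _ (fun p => h' i p)
  have hc : ∀ q : Fin b, (fun j => c (j, q)) = 0 :=
    fun q => cartan_inj _ (fun i => congrFun (hD i) q)
  funext jq
  exact congrFun (hc jq.2) jq.1

lemma gamma_li {a b : ℕ} {M : Type*} [AddCommGroup M] [Module ℤ M]
    (B : LinearMap.BilinForm ℤ M) (γ : Fin a → Fin b → M)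
    (hgram : ∀ i j p q, B (γ i p) (γ j q) = cartanA a i j * cartanA b p q) :
    LinearIndependent ℤ (fun ij : Fin a × Fin b => γ ij.1 ij.2) := by
  rw [Fintype.linearIndependent_iff]
  intro g hg
  have key : ∀ (k : Fin a) (m : Fin b),
      ∑ jq : Fin a × Fin b, g jq * (cartanA a k jq.1 * cartanA b m jq.2) = 0 := by
    intro k m
    have h2 := congrArg (fun x => B x (γ k m)) hg
    simp only [map_sum, LinearMap.sum_apply, map_smul, LinearMap.smul_apply, hgram,
      smul_eq_mul, map_zero, LinearMap.zero_apply] at h2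
    rw [← h2]
    apply Finset.sum_congr rfl
    intro jq _
    rw [cartan_symm a k jq.1, cartan_symm b m jq.2]
  have := cartan2_inj g key
  exact fun i => congrFun this i

/-- The map `α^{ij} - α^{i,j+1} ↦ β^{ji} - β^{j,i+1}` extends to an isometry of
lattices `N_n^l → Ñ_l^n`; in particular
`(α^{ip} - α^{i,p+1}, α^{jq} - α^{j,q+1}) = (β^{pi} - β^{p,i+1}, β^{qj} - β^{q,j+1})`. -/
theorem isometry_Nnl_Nln (n l : ℕ) (hn : 2 ≤ n) (hl : 2 ≤ l)
    (M M' : Type*) [AddCommGroup M] [Module ℤ M] [AddCommGroup M'] [Module ℤ M']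
    (B : LinearMap.BilinForm ℤ M) (B' : LinearMap.BilinForm ℤ M')
    (α : Fin (n - 1) → Fin l → M) (β : Fin (l - 1) → Fin n → M')
    (hα : ∀ (i p : Fin (n - 1)) (j q : Fin l),
      B (α i j) (α p q) = if j = q then cartanA (n - 1) i p else 0)
    (hβ : ∀ (i p : Fin (l - 1)) (j q : Fin n),
      B' (β i j) (β p q) = if j = q then cartanA (l - 1) i p else 0)
    -- the generators of `N_n^l` and of `Ñ_l^n`
    (γ : Fin (n - 1) → Fin (l - 1) → M) (γ' : Fin (l - 1) → Fin (n - 1) → M')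
    (hγ : ∀ (i : Fin (n - 1)) (j : Fin (l - 1)),
      γ i j = α i ⟨j.val, by have := j.isLt; omega⟩ - α i ⟨j.val + 1, by have := j.isLt; omega⟩)
    (hγ' : ∀ (j : Fin (l - 1)) (i : Fin (n - 1)),
      γ' j i = β j ⟨i.val, by have := i.isLt; omega⟩ - β j ⟨i.val + 1, by have := i.isLt; omega⟩) :
    (∀ (i j : Fin (n - 1)) (p q : Fin (l - 1)),
        B (γ i p) (γ j q) = B' (γ' p i) (γ' q j)) ∧
    ∃ f : Submodule.span ℤ (Set.range fun ij : Fin (n - 1) × Fin (l - 1) => γ ij.1 ij.2) ≃ₗ[ℤ]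
        Submodule.span ℤ (Set.range fun ji : Fin (l - 1) × Fin (n - 1) => γ' ji.1 ji.2),
      (∀ x y, B' (f x) (f y) = B (x : M) (y : M)) ∧
      (∀ (i : Fin (n - 1)) (j : Fin (l - 1)),
        (f ⟨γ i j, Submodule.subset_span ⟨(i, j), rfl⟩⟩ : M') = γ' j i) := by
  have gram1 : ∀ (i j : Fin (n - 1)) (p q : Fin (l - 1)),
      B (γ i p) (γ j q) = cartanA (n - 1) i j * cartanA (l - 1) p q := by
    intro i j p q
    rw [hγ, hγ]
    exact gram_calc B α hα i j p q
  have gram2 : ∀ (p q : Fin (l - 1)) (i j : Fin (n - 1)),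
      B' (γ' p i) (γ' q j) = cartanA (l - 1) p q * cartanA (n - 1) i j := by
    intro p q i j
    rw [hγ', hγ']
    exact gram_calc B' β hβ p q i j
  have part1 : ∀ (i j : Fin (n - 1)) (p q : Fin (l - 1)),
      B (γ i p) (γ j q) = B' (γ' p i) (γ' q j) := by
    intro i j p q
    rw [gram1, gram2, mul_comm]
  refine ⟨part1, ?_⟩
  letI u1 : Unique (Module ℤ ↥(Submodule.span ℤ (Set.range fun ij : Fin (n - 1) × Fin (l - 1) => γ ij.1 ij.2))) :=
    AddCommGroup.uniqueIntModule
  letI u2 : Unique (Module ℤ ↥(Submodule.span ℤ (Set.range fun ji : Fin (l - 1) × Fin (n - 1) => γ' ji.1 ji.2))) :=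
    AddCommGroup.uniqueIntModule
  have einst1 : (AddCommGroup.toIntModule
      ↥(Submodule.span ℤ (Set.range fun ij : Fin (n - 1) × Fin (l - 1) => γ ij.1 ij.2)))
      = (Submodule.span ℤ (Set.range fun ij : Fin (n - 1) × Fin (l - 1) => γ ij.1 ij.2)).module :=
    Subsingleton.elim _ _
  have einst2 : (AddCommGroup.toIntModule
      ↥(Submodule.span ℤ (Set.range fun ji : Fin (l - 1) × Fin (n - 1) => γ' ji.1 ji.2)))
      = (Submodule.span ℤ (Set.range fun ji : Fin (l - 1) × Fin (n - 1) => γ' ji.1 ji.2)).module :=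
    Subsingleton.elim _ _
  rw [einst1, einst2]
  letI m1 : Module ℤ ↥(Submodule.span ℤ (Set.range fun ij : Fin (n - 1) × Fin (l - 1) => γ ij.1 ij.2)) :=
    (Submodule.span ℤ (Set.range fun ij : Fin (n - 1) × Fin (l - 1) => γ ij.1 ij.2)).module
  letI m2 : Module ℤ ↥(Submodule.span ℤ (Set.range fun ji : Fin (l - 1) × Fin (n - 1) => γ' ji.1 ji.2)) :=
    (Submodule.span ℤ (Set.range fun ji : Fin (l - 1) × Fin (n - 1) => γ' ji.1 ji.2)).module
  have li1 : LinearIndependent ℤ (fun ij : Fin (n - 1) × Fin (l - 1) => γ ij.1 ij.2) :=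
    gamma_li B γ gram1
  have li2 : LinearIndependent ℤ (fun ji : Fin (l - 1) × Fin (n - 1) => γ' ji.1 ji.2) :=
    gamma_li B' γ' gram2
  let b1 := Module.Basis.span li1
  let b2 := Module.Basis.span li2
  let f := b1.equiv b2 (Equiv.prodComm (Fin (n - 1)) (Fin (l - 1)))
  have hb1 : ∀ ij : Fin (n - 1) × Fin (l - 1), (b1 ij : M) = γ ij.1 ij.2 :=
    fun ij => congrArg Subtype.val (Module.Basis.span_apply li1 ij)
  have hb2 : ∀ ji : Fin (l - 1) × Fin (n - 1), (b2 ji : M') = γ' ji.1 ji.2 :=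
    fun ji => congrArg Subtype.val (Module.Basis.span_apply li2 ji)
  have hfb : ∀ ij : Fin (n - 1) × Fin (l - 1), f (b1 ij) = b2 (ij.2, ij.1) := by
    intro ij
    simp only [f, Module.Basis.equiv_apply, Equiv.prodComm_apply]
    rfl
  -- isometry
  have hiso : ∀ x y, B' (f x) (f y) = B (x : M) (y : M) := by
    have hmaps : B.compl₁₂
          (Submodule.span ℤ (Set.range fun ij : Fin (n - 1) × Fin (l - 1) => γ ij.1 ij.2)).subtype
          (Submodule.span ℤ (Set.range fun ij : Fin (n - 1) × Fin (l - 1) => γ ij.1 ij.2)).subtype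
        = B'.compl₁₂
          ((Submodule.span ℤ (Set.range fun ji : Fin (l - 1) × Fin (n - 1) => γ' ji.1 ji.2)).subtype ∘ₗ f.toLinearMap)
          ((Submodule.span ℤ (Set.range fun ji : Fin (l - 1) × Fin (n - 1) => γ' ji.1 ji.2)).subtype ∘ₗ f.toLinearMap) := by
      refine b1.ext fun ip => b1.ext fun jq => ?_
      simp only [LinearMap.compl₁₂_apply, Submodule.subtype_apply, LinearMap.comp_apply,
        LinearEquiv.coe_coe]
      rw [hfb, hfb, hb2, hb2, hb1, hb1, gram1, gram2, mul_comm]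
    intro x y
    have h2 := DFunLike.congr_fun (DFunLike.congr_fun hmaps x) y
    simpa only [LinearMap.compl₁₂_apply, LinearMap.comp_apply, Submodule.coe_subtype,
      LinearEquiv.coe_coe] using h2.symm
  refine ⟨f, hiso, ?_⟩
  intro i j
  have hgen : (⟨γ i j, Submodule.subset_span ⟨(i, j), rfl⟩⟩ :
      Submodule.span ℤ (Set.range fun ij : Fin (n - 1) × Fin (l - 1) => γ ij.1 ij.2)) = b1 (i, j) :=
    Subtype.ext (hb1 (i, j)).symm
  rw [hgen, hfb (i, j), hb2]
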